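/- Let α > 0, ε > 0 and θ ∈ ℝ. Define g(ζ) = −(1/2)·(ε·θ²/ζ + α²·ζ/ε + 2ζ·(ln(ζ/ε) − 1)) for ζ > 0. Then for ζ̄ > 0, the derivative g'(ζ̄) = 0 if and only if θ² = ζ̄²·(2·ln(ζ̄/ε) + α²/ε)/ε; moreover any such critical point ζ̄ is the unique global maximizer of g on (0, ∞). -/

import Mathlib

set_option maxHeartbeats 1000000

theorem stmt_13 (α ε θ : ℝ) (hα : 0 < α) (hε : 0 < ε)
    (g : ℝ → ℝ)
    (hg : ∀ ζ : ℝ, g ζ =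
      -(1 / 2) * (ε * θ ^ 2 / ζ + α ^ 2 * ζ / ε + 2 * ζ * (Real.log (ζ / ε) - 1)))
    (ζb : ℝ) (hζb : 0 < ζb) :
    (deriv g ζb = 0 ↔ θ ^ 2 = ζb ^ 2 * (2 * Real.log (ζb / ε) + α ^ 2 / ε) / ε) ∧
    (deriv g ζb = 0 → ∀ ζ : ℝ, 0 < ζ → ζ ≠ ζb → g ζ < g ζb) := by
  have hεne : ε ≠ 0 := hε.ne'
  have hζbne : ζb ≠ 0 := hζb.ne'
  have hgf : g = fun ζ => -(1 / 2) * (ε * θ ^ 2 / ζ + α ^ 2 * ζ / ε + 2 * ζ * (Real.log (ζ / ε) - 1)) := funext hg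
  -- derivative computation
  have h1 : HasDerivAt (fun ζ : ℝ => ε * θ ^ 2 / ζ) (-(ε * θ ^ 2 / ζb ^ 2)) ζb := by
    have := (hasDerivAt_inv hζbne).const_mul (ε * θ ^ 2)
    simpa [div_eq_mul_inv, mul_comm, mul_assoc, neg_mul, mul_neg] using this
  have h2 : HasDerivAt (fun ζ : ℝ => α ^ 2 * ζ / ε) (α ^ 2 / ε) ζb := by
    simpa using ((hasDerivAt_id ζb).const_mul (α ^ 2)).div_const ε
  have hlog : HasDerivAt (fun ζ : ℝ => Real.log (ζ / ε)) ζb⁻¹ ζb := by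
    have := (Real.hasDerivAt_log (div_ne_zero hζbne hεne)).comp ζb ((hasDerivAt_id ζb).div_const ε)
    exact this.congr_deriv (by field_simp)
  have h3 : HasDerivAt (fun ζ : ℝ => 2 * ζ * (Real.log (ζ / ε) - 1))
      (2 * (Real.log (ζb / ε) - 1) + 2 * ζb * ζb⁻¹) ζb := by
    exact (((hasDerivAt_id ζb).const_mul 2).mul (hlog.sub_const 1)).congr_deriv (by simp)
  have hD : HasDerivAt g
      (-(1 / 2) * ((-(ε * θ ^ 2 / ζb ^ 2)) + α ^ 2 / ε + (2 * (Real.log (ζb / ε) - 1) + 2 * ζb * ζb⁻¹))) ζb := by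
    rw [hgf]
    exact ((h1.add h2).add h3).const_mul (-(1 / 2))
  have hderiv : deriv g ζb = -(1 / 2) * ((-(ε * θ ^ 2 / ζb ^ 2)) + α ^ 2 / ε + 2 * Real.log (ζb / ε)) := by
    rw [hD.deriv, mul_assoc, mul_inv_cancel₀ hζbne]
    ring
  have hiff : deriv g ζb = 0 ↔ θ ^ 2 = ζb ^ 2 * (2 * Real.log (ζb / ε) + α ^ 2 / ε) / ε := by
    rw [hderiv]
    constructor
    · intro h
      have h' : ε * θ ^ 2 / ζb ^ 2 = α ^ 2 / ε + 2 * Real.log (ζb / ε) := by nlinarith [h]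
      field_simp at h' ⊢
      nlinarith [h']
    · intro h
      field_simp at h
      have h' : ε * θ ^ 2 / ζb ^ 2 = α ^ 2 / ε + 2 * Real.log (ζb / ε) := by
        field_simp
        nlinarith [h]
      rw [h']
      ring
  refine ⟨hiff, ?_⟩
  intro h0 ζ hζ hne
  have hζne : ζ ≠ 0 := hζ.ne'
  have hc : θ ^ 2 = ζb ^ 2 * (2 * Real.log (ζb / ε) + α ^ 2 / ε) / ε := hiff.mp h0
  -- key log inequality
  have hkey : Real.log ζb - Real.log ζ < ζb / ζ - 1 := by
    have h := Real.log_lt_sub_one_of_pos (div_pos hζb hζ) (by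
      intro h1
      exact hne (by field_simp at h1; linarith))
    rwa [Real.log_div hζbne hζne] at h
  have hkey2 : ζ - ζb < ζ * (Real.log ζ - Real.log ζb) := by
    have h := mul_lt_mul_of_pos_left hkey hζ
    have hx : ζ * (ζb / ζ - 1) = ζb - ζ := by field_simp
    nlinarith [h]
  -- nonnegativity of c
  have hcnn : 0 ≤ 2 * Real.log (ζb / ε) + α ^ 2 / ε := by
    have h' : 0 ≤ ζb ^ 2 * (2 * Real.log (ζb / ε) + α ^ 2 / ε) / ε := hc ▸ sq_nonneg θ
    by_contra hc0
    push_neg at hc0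
    have h1 : ζb ^ 2 * (2 * Real.log (ζb / ε) + α ^ 2 / ε) < 0 :=
      mul_neg_of_pos_of_neg (by positivity) hc0
    have h2 : ζb ^ 2 * (2 * Real.log (ζb / ε) + α ^ 2 / ε) / ε < 0 := div_neg_of_neg_of_pos h1 hε
    linarith
  -- expand logs
  have hlζ : Real.log (ζ / ε) = Real.log ζ - Real.log ε := Real.log_div hζne hεne
  have hlζb : Real.log (ζb / ε) = Real.log ζb - Real.log ε := Real.log_div hζbne hεne
  rw [hg ζ, hg ζb, hc, hlζ, hlζb, ← sub_pos]
  rw [hlζb] at hcnn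
  set a := Real.log ζ with ha
  set b := Real.log ζb with hb
  set e := Real.log ε with he
  have hsne : ζ - ζb ≠ 0 := sub_ne_zero.mpr hne
  have hsq : 0 < (ζ - ζb) ^ 2 := by positivity
  have hE : (-(1 / 2) * (ε * (ζb ^ 2 * (2 * (b - e) + α ^ 2 / ε) / ε) / ζb + α ^ 2 * ζb / ε + 2 * ζb * (b - e - 1)))
      - (-(1 / 2) * (ε * (ζb ^ 2 * (2 * (b - e) + α ^ 2 / ε) / ε) / ζ + α ^ 2 * ζ / ε + 2 * ζ * (a - e - 1)))
      = (1 / 2) * ((2 * (b - e) + α ^ 2 / ε) * (ζ - ζb) ^ 2 / ζ + 2 * (ζ * (a - b) - (ζ - ζb))) := by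
    field_simp
    ring
  rw [hE]
  have hpos1 : 0 ≤ (2 * (b - e) + α ^ 2 / ε) * (ζ - ζb) ^ 2 / ζ := by positivity
  nlinarith [hkey2]
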